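/- Let $V=\bigoplus_{n\in\mathbb{Z}}V_n$ be a graded vector space with $\dim V<\infty$. Suppose $e:V\to V$ maps $V_n$ to $V_{n+2}$, $h$ acts on $V_n$ by the scalar $n$, $e$ is such that $e^n:V_{-n}\to V_n$ is an isomorphism for all $n\ge 0$ (hard Lefschetz). Then there exists a unique linear operator $f:V\to V$ mapping $V_n$ to $V_{n-2}$ such that $(e,h,f)$ is an $\mathfrak{sl}_2$-triple, i.e. $[h,e]=2e$, $[h,f]=-2f$, $[e,f]=h$. -/

import Mathlib

set_option linter.unusedSectionVars false

section SL2

variable {V : Type} [AddCommGroup V] [Module ℂ V] [FiniteDimensional ℂ V]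
variable {Vn : ℤ → Submodule ℂ V} {e h : Module.End ℂ V}

lemma sl2_pow_mem (he : ∀ n : ℤ, ∀ v ∈ Vn n, e v ∈ Vn (n + 2)) :
    ∀ (j : ℕ) (m : ℤ), ∀ v ∈ Vn m, (e ^ j) v ∈ Vn (m + 2 * j) := by
  intro j
  induction j with
  | zero => intro m v hv; simpa using hv
  | succ j ih =>
    intro m v hv
    have h1 : (e ^ (j + 1)) v = e ((e ^ j) v) := by
      rw [pow_succ', Module.End.mul_apply]
    have h2 := he _ _ (ih m v hv)
    have h3 : m + 2 * ((j : ℤ) + 1) = m + 2 * j + 2 := by ring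
    rw [h1]; push_cast; rw [h3]; exact h2

lemma sl2_pow_inj (hHL : ∀ n : ℕ, Set.BijOn (⇑(e ^ n)) ((Vn (-(n : ℤ))) : Set V) (Vn (n : ℤ)))
    (n j : ℕ) (hjn : j ≤ n) {v : V} (hv : v ∈ Vn (-(n : ℤ)))
    (hz : (e ^ j) v = 0) : v = 0 := by
  have h1 : (e ^ n) v = 0 := by
    have hd : e ^ n = e ^ (n - j) * e ^ j := by
      rw [← pow_add, Nat.sub_add_cancel hjn]
    rw [hd, Module.End.mul_apply, hz, map_zero]
  exact (hHL n).injOn hv (Submodule.zero_mem _) (by rw [h1, map_zero])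

lemma sl2_pow_surj (hHL : ∀ n : ℕ, Set.BijOn (⇑(e ^ n)) ((Vn (-(n : ℤ))) : Set V) (Vn (n : ℤ)))
    (n : ℕ) {w : V} (hw : w ∈ Vn (n : ℤ)) :
    ∃ v ∈ Vn (-(n : ℤ)), (e ^ n) v = w := by
  obtain ⟨v, hv, hvw⟩ := (hHL n).surjOn hw
  exact ⟨v, hv, hvw⟩

end SL2

section SL2b
set_option linter.unusedSectionVars false

variable {V : Type} [AddCommGroup V] [Module ℂ V] [FiniteDimensional ℂ V]
variable (Vn : ℤ → Submodule ℂ V) (e : Module.End ℂ V)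

/-- The primitive part in degree `-n`. -/
noncomputable def Prim (n : ℕ) : Submodule ℂ V :=
  LinearMap.ker (e ^ (n + 1)) ⊓ Vn (-(n : ℤ))

variable {Vn e}

lemma Prim_mem_Vn {n : ℕ} {b : V} (hb : b ∈ Prim Vn e n) : b ∈ Vn (-(n : ℤ)) := hb.2

lemma Prim_pow_succ {n : ℕ} {b : V} (hb : b ∈ Prim Vn e n) : (e ^ (n + 1)) b = 0 := hb.1

variable (hdec : DirectSum.IsInternal Vn)

/-- Projection onto the degree `m` part. -/
noncomputable def sl2proj (m : ℤ) : Module.End ℂ V :=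
  (Vn m).subtype ∘ₗ (DirectSum.component ℂ ℤ (fun i => ↥(Vn i)) m) ∘ₗ
    (LinearEquiv.ofBijective (DirectSum.coeLinearMap Vn) hdec).symm.toLinearMap

lemma sl2proj_of_mem_same {m : ℤ} {x : V} (hx : x ∈ Vn m) : sl2proj hdec m x = x := by
  have := hdec.ofBijective_coeLinearMap_of_mem hx
  simp only [sl2proj, LinearMap.coe_comp, Function.comp_apply, LinearEquiv.coe_coe,
    ← DirectSum.apply_eq_component, this, Submodule.coe_subtype]

lemma sl2proj_of_mem_ne {m m' : ℤ} (hne : m' ≠ m) {x : V} (hx : x ∈ Vn m') :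
    sl2proj hdec m x = 0 := by
  have := hdec.ofBijective_coeLinearMap_of_mem_ne hne hx
  simp only [sl2proj, LinearMap.coe_comp, Function.comp_apply, LinearEquiv.coe_coe,
    ← DirectSum.apply_eq_component, this, Submodule.coe_subtype, Submodule.coe_zero]

end SL2b

section SL2c
set_option linter.unusedSectionVars false

variable {V : Type} [AddCommGroup V] [Module ℂ V] [FiniteDimensional ℂ V]
variable {Vn : ℤ → Submodule ℂ V} {e : Module.End ℂ V}

lemma sl2_split (he : ∀ n : ℤ, ∀ v ∈ Vn n, e v ∈ Vn (n + 2))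
    (hHL : ∀ n : ℕ, Set.BijOn (⇑(e ^ n)) ((Vn (-(n : ℤ))) : Set V) (Vn (n : ℤ)))
    (n : ℕ) : Vn (-(n : ℤ)) ≤ Prim Vn e n ⊔ Submodule.map e (Vn (-(n : ℤ) - 2)) := by
  intro v hv
  have h1 : (e ^ (n + 1)) v ∈ Vn ((n : ℤ) + 2) := by
    have := sl2_pow_mem he (n + 1) _ v hv
    have harith : -(n : ℤ) + 2 * ((n : ℕ) + 1 : ℕ) = (n : ℤ) + 2 := by push_cast; ring
    rwa [harith] at this
  have h1' : (e ^ (n + 1)) v ∈ Vn (((n + 2 : ℕ) : ℤ)) := by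
    have : ((n + 2 : ℕ) : ℤ) = (n : ℤ) + 2 := by push_cast; ring
    rwa [this]
  obtain ⟨w, hw, hww⟩ := sl2_pow_surj hHL (n + 2) h1'
  have hw' : w ∈ Vn (-(n : ℤ) - 2) := by
    have : -((n + 2 : ℕ) : ℤ) = -(n : ℤ) - 2 := by push_cast; ring
    rwa [this] at hw
  have hew : e w ∈ Vn (-(n : ℤ)) := by
    have := he _ _ hw'
    have harith : -(n : ℤ) - 2 + 2 = -(n : ℤ) := by ring
    rwa [harith] at this
  have hker : v - e w ∈ Prim Vn e n := by
    refine Submodule.mem_inf.mpr ⟨?_, ?_⟩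
    · have hcomp : (e ^ (n + 1)) (e w) = (e ^ (n + 2)) w := by
        have : e ^ (n + 2) = e ^ (n + 1) * e := by rw [← pow_succ]
        rw [this, Module.End.mul_apply]
      rw [LinearMap.mem_ker, map_sub, hcomp, hww, sub_self]
    · exact Submodule.sub_mem _ hv hew
  have : v = (v - e w) + e w := by abel
  rw [this]
  exact Submodule.add_mem _ (Submodule.mem_sup_left hker)
    (Submodule.mem_sup_right ⟨w, hw', rfl⟩)

lemma sl2_exists_M (hdec : DirectSum.IsInternal Vn) :
    ∃ M : ℕ, ∀ m : ℤ, (M : ℤ) ≤ |m| → Vn m = ⊥ := by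
  have hfin : {m : ℤ | Vn m ≠ ⊥}.Finite :=
    Submodule.finite_ne_bot_of_iSupIndep hdec.submodule_iSupIndep
  have hfin2 : ((fun m : ℤ => m.natAbs) '' {m : ℤ | Vn m ≠ ⊥}).Finite := hfin.image _
  obtain ⟨M, hM⟩ := hfin2.bddAbove
  refine ⟨M + 1, fun m hm => ?_⟩
  by_contra hne
  have : m.natAbs ≤ M := hM ⟨m, hne, rfl⟩
  have : (m.natAbs : ℤ) = |m| := Int.abs_eq_natAbs m ▸ rfl
  omega

end SL2c

section SL2d
set_option linter.unusedSectionVars false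

variable {V : Type} [AddCommGroup V] [Module ℂ V] [FiniteDimensional ℂ V]
variable (Vn : ℤ → Submodule ℂ V) (e : Module.End ℂ V)

/-- index of a chosen basis of the primitive part -/
abbrev PIdx (n : ℕ) := Module.Free.ChooseBasisIndex ℂ ↥(Prim Vn e n)

noncomputable def primBasis (n : ℕ) : Module.Basis (PIdx Vn e n) ℂ ↥(Prim Vn e n) :=
  Module.Free.chooseBasis ℂ _

/-- Index for the global string basis. -/
abbrev SIdx := Σ n : ℕ, Fin (n + 1) × PIdx Vn e n

/-- The global string family. -/
noncomputable def sfam : SIdx Vn e → V :=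
  fun j => (e ^ (j.2.1 : ℕ)) ↑(primBasis Vn e j.1 j.2.2)

variable {Vn e}

lemma sfam_mem (he : ∀ n : ℤ, ∀ v ∈ Vn n, e v ∈ Vn (n + 2)) (j : SIdx Vn e) :
    sfam Vn e j ∈ Vn (-(j.1 : ℤ) + 2 * (j.2.1 : ℕ)) :=
  sl2_pow_mem he _ _ _ (Prim_mem_Vn (primBasis Vn e j.1 j.2.2).2)

lemma sfam_e_lt {n : ℕ} {k : Fin (n + 1)} {i : PIdx Vn e n} (hk : (k : ℕ) < n) :
    e (sfam Vn e ⟨n, k, i⟩) = sfam Vn e ⟨n, ⟨(k : ℕ) + 1, by omega⟩, i⟩ := by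
  simp only [sfam]
  rw [← Module.End.mul_apply, ← pow_succ']

lemma sfam_e_top {n : ℕ} {i : PIdx Vn e n} {k : Fin (n + 1)} (hk : (k : ℕ) = n) :
    e (sfam Vn e ⟨n, k, i⟩) = 0 := by
  simp only [sfam]
  rw [← Module.End.mul_apply, ← pow_succ', hk, Prim_pow_succ (primBasis Vn e n _).2]

lemma sl2_span_e_stable :
    Submodule.map e (Submodule.span ℂ (Set.range (sfam Vn e))) ≤
      Submodule.span ℂ (Set.range (sfam Vn e)) := by
  rw [Submodule.map_span]
  refine Submodule.span_le.mpr ?_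
  rintro x ⟨y, ⟨j, rfl⟩, rfl⟩
  obtain ⟨n, k, i⟩ := j
  by_cases hk : (k : ℕ) < n
  · rw [sfam_e_lt hk]
    exact Submodule.subset_span ⟨_, rfl⟩
  · rw [sfam_e_top (by omega)]
    exact Submodule.zero_mem _

lemma sl2_span_pow_stable (t : ℕ) :
    Submodule.map (e ^ t) (Submodule.span ℂ (Set.range (sfam Vn e))) ≤
      Submodule.span ℂ (Set.range (sfam Vn e)) := by
  induction t with
  | zero => rintro x ⟨y, hy, rfl⟩; simpa using hy
  | succ t ih =>
    have : e ^ (t + 1) = e * e ^ t := by rw [← pow_succ']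
    rw [this, Module.End.mul_eq_comp, Submodule.map_comp]
    exact le_trans (Submodule.map_mono ih) sl2_span_e_stable

lemma sl2_prim_le_span (n : ℕ) :
    Prim Vn e n ≤ Submodule.span ℂ (Set.range (sfam Vn e)) := by
  have h1 : Prim Vn e n = Submodule.map (Prim Vn e n).subtype ⊤ := by
    rw [Submodule.map_subtype_top]
  rw [h1, ← (primBasis Vn e n).span_eq, Submodule.map_span]
  refine Submodule.span_le.mpr ?_
  rintro x ⟨y, ⟨i, rfl⟩, rfl⟩
  have : ((primBasis Vn e n i : V)) = sfam Vn e ⟨n, ⟨0, by omega⟩, i⟩ := by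
    simp [sfam]
  rw [Submodule.coe_subtype, this]
  exact Submodule.subset_span ⟨_, rfl⟩

lemma sl2_span_top (hdec : DirectSum.IsInternal Vn)
    (he : ∀ n : ℤ, ∀ v ∈ Vn n, e v ∈ Vn (n + 2))
    (hHL : ∀ n : ℕ, Set.BijOn (⇑(e ^ n)) ((Vn (-(n : ℤ))) : Set V) (Vn (n : ℤ))) :
    Submodule.span ℂ (Set.range (sfam Vn e)) = ⊤ := by
  set S := Submodule.span ℂ (Set.range (sfam Vn e)) with hS
  obtain ⟨M, hM⟩ := sl2_exists_M hdec
  have hneg : ∀ d n : ℕ, M ≤ n + d → Vn (-(n : ℤ)) ≤ S := by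
    intro d
    induction d with
    | zero =>
      intro n hn
      rw [hM (-(n : ℤ)) (by simp; omega)]
      exact bot_le
    | succ d ih =>
      intro n hn
      refine le_trans (sl2_split he hHL n) (sup_le (sl2_prim_le_span n) ?_)
      have harith : -(n : ℤ) - 2 = -((n + 2 : ℕ) : ℤ) := by push_cast; ring
      rw [harith]
      exact le_trans (Submodule.map_mono (ih (n + 2) (by omega)))
        (le_trans (Submodule.map_mono le_rfl) (by
          have := sl2_span_pow_stable (e := e) (Vn := Vn) 1
          simpa using sl2_span_e_stable))
  have hallneg : ∀ n : ℕ, Vn (-(n : ℤ)) ≤ S := fun n => hneg M n (by omega)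
  have hpos : ∀ n : ℕ, Vn ((n : ℤ)) ≤ S := by
    intro n w hw
    obtain ⟨v, hv, rfl⟩ := sl2_pow_surj hHL n hw
    exact sl2_span_pow_stable n ⟨v, hallneg n hv, rfl⟩
  have hall : ∀ m : ℤ, Vn m ≤ S := by
    intro m
    rcases le_or_gt 0 m with hm | hm
    · have : m = ((m.toNat : ℕ) : ℤ) := by omega
      rw [this]; exact hpos _
    · have : m = -(((-m).toNat : ℕ) : ℤ) := by omega
      rw [this]; exact hallneg _
  rw [← top_le_iff, ← hdec.submodule_iSup_eq_top]
  exact iSup_le hall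

end SL2d

section SL2e
set_option linter.unusedSectionVars false

variable {V : Type} [AddCommGroup V] [Module ℂ V] [FiniteDimensional ℂ V]
variable {Vn : ℤ → Submodule ℂ V} {e : Module.End ℂ V}

lemma sl2_kill (hdec : DirectSum.IsInternal Vn)
    (he : ∀ n : ℤ, ∀ v ∈ Vn n, e v ∈ Vn (n + 2))
    (hHL : ∀ n : ℕ, Set.BijOn (⇑(e ^ n)) ((Vn (-(n : ℤ))) : Set V) (Vn (n : ℤ)))
    (T : ℕ) (l : SIdx Vn e →₀ ℂ)
    (hsupp : ∀ j ∈ l.support, j.1 ≤ T)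
    (hl : Finsupp.linearCombination ℂ (sfam Vn e) l = 0)
    (j₀ : SIdx Vn e) (hj₀ : j₀.1 = T) : l j₀ = 0 := by
  classical
  obtain ⟨n₀, k₀, i₀⟩ := j₀
  dsimp at hj₀
  subst hj₀
  set m : ℤ := -(n₀ : ℤ) + 2 * ((k₀ : ℕ) : ℤ) with hm
  set Φ : Module.End ℂ V := (e ^ (n₀ - (k₀ : ℕ))) ∘ₗ sl2proj hdec m with hPhidef
  have hPhi0 : Φ (Finsupp.linearCombination ℂ (sfam Vn e) l) = 0 := by rw [hl, map_zero]
  rw [Finsupp.linearCombination_apply, map_finsuppSum] at hPhi0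
  simp only [map_smul] at hPhi0
  rw [Finsupp.sum] at hPhi0
  -- (i) terms with wrong index vanish
  have hkill : ∀ j : SIdx Vn e, j.1 ≤ n₀ →
      ¬(j.1 = n₀ ∧ (j.2.1 : ℕ) = (k₀ : ℕ)) → Φ (sfam Vn e j) = 0 := by
    rintro ⟨n, k, i⟩ hle hne
    dsimp at hle hne ⊢
    by_cases hw : -(n : ℤ) + 2 * ((k : ℕ) : ℤ) = m
    · -- weight matches, so n < n₀ (strictly, by 2), and the power kills it
      have hk : (k : ℕ) ≤ n := by omega
      have hk0 : (k₀ : ℕ) ≤ n₀ := by omega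
      have hnlt : n + 2 ≤ n₀ := by
        rcases Nat.lt_or_ge n n₀ with h1 | h1
        · omega
        · exfalso; apply hne; constructor <;> omega
      have hproj : sl2proj hdec m (sfam Vn e ⟨n, k, i⟩) = sfam Vn e ⟨n, k, i⟩ := by
        refine sl2proj_of_mem_same hdec ?_
        have := sfam_mem he (⟨n, k, i⟩ : SIdx Vn e)
        rwa [hw] at this
      rw [hPhidef, LinearMap.comp_apply, hproj]
      show (e ^ (n₀ - (k₀ : ℕ))) ((e ^ (k : ℕ)) ↑(primBasis Vn e n i)) = 0
      rw [← Module.End.mul_apply, ← pow_add]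
      have hE : (n₀ - (k₀ : ℕ)) + (k : ℕ) =
          ((n₀ - (k₀ : ℕ)) + (k : ℕ) - (n + 1)) + (n + 1) := by omega
      rw [hE, pow_add, Module.End.mul_apply, Prim_pow_succ (primBasis Vn e n i).2, map_zero]
    · rw [hPhidef, LinearMap.comp_apply,
        sl2proj_of_mem_ne hdec hw (sfam_mem he ⟨n, k, i⟩), map_zero]
  -- (ii) matching terms
  have hsame : ∀ i : PIdx Vn e n₀,
      Φ (sfam Vn e ⟨n₀, k₀, i⟩) = (e ^ n₀) ↑(primBasis Vn e n₀ i) := by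
    intro i
    have hproj : sl2proj hdec m (sfam Vn e ⟨n₀, k₀, i⟩) = sfam Vn e ⟨n₀, k₀, i⟩ :=
      sl2proj_of_mem_same hdec (sfam_mem he ⟨n₀, k₀, i⟩)
    rw [hPhidef, LinearMap.comp_apply, hproj]
    show (e ^ (n₀ - (k₀ : ℕ))) ((e ^ (k₀ : ℕ)) ↑(primBasis Vn e n₀ i)) = _
    rw [← Module.End.mul_apply, ← pow_add, Nat.sub_add_cancel (by omega)]
  -- assemble the sums
  set emb : PIdx Vn e n₀ → SIdx Vn e := fun i => ⟨n₀, k₀, i⟩ with hembdef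
  have hembinj : Function.Injective emb := by
    intro a b hab
    simp only [hembdef, Sigma.mk.inj_iff, heq_eq_eq, Prod.mk.injEq, true_and] at hab
    exact hab
  set F : SIdx Vn e → V := fun j => l j • Φ (sfam Vn e j) with hF
  have h1 : ∑ i : PIdx Vn e n₀, l (emb i) • ((e ^ n₀) ↑(primBasis Vn e n₀ i) : V)
      = ∑ i : PIdx Vn e n₀, F (emb i) := by
    refine Finset.sum_congr rfl fun i _ => ?_
    rw [hF]; dsimp only; rw [hsame i]
  have h2 : ∑ i : PIdx Vn e n₀, F (emb i)
      = ∑ j ∈ Finset.univ.image emb, F j := (Finset.sum_image (fun a _ b _ hab =>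
        hembinj hab)).symm
  have h3 : ∑ j ∈ Finset.univ.image emb, F j
      = ∑ j ∈ l.support ∪ Finset.univ.image emb, F j := by
    refine Finset.sum_subset Finset.subset_union_right ?_
    intro j hj hnotim
    have hjs : j ∈ l.support := by
      rcases Finset.mem_union.mp hj with h | h
      · exact h
      · exact absurd h hnotim
    rw [hF]; dsimp only
    rw [hkill j (hsupp j hjs) ?_, smul_zero]
    rintro ⟨rfl, hkk⟩
    apply hnotim
    refine Finset.mem_image.mpr ⟨j.2.2, Finset.mem_univ _, ?_⟩
    rw [hembdef]
    obtain ⟨n, k, i⟩ := j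
    dsimp at hkk ⊢
    congr 1
    exact Prod.ext (Fin.ext hkk.symm) rfl
  have h4 : ∑ j ∈ l.support ∪ Finset.univ.image emb, F j = ∑ j ∈ l.support, F j := by
    refine (Finset.sum_subset Finset.subset_union_left ?_).symm
    intro j hj hnot
    rw [hF]; dsimp only
    rw [Finsupp.notMem_support_iff.mp hnot, zero_smul]
  have hsum : ∑ i : PIdx Vn e n₀, l (emb i) • ((e ^ n₀) ↑(primBasis Vn e n₀ i) : V) = 0 := by
    rw [h1, h2, h3, h4]; exact hPhi0
  -- conclude
  have hx : (e ^ n₀) (∑ i : PIdx Vn e n₀, l (emb i) • ((primBasis Vn e n₀ i : V))) = 0 := by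
    rw [map_sum]
    simpa only [map_smul] using hsum
  have hxmem : (∑ i : PIdx Vn e n₀, l (emb i) • ((primBasis Vn e n₀ i : V)))
      ∈ Vn (-(n₀ : ℤ)) :=
    Submodule.sum_mem _ fun i _ =>
      Submodule.smul_mem _ _ (Prim_mem_Vn (primBasis Vn e n₀ i).2)
  have hx0 := sl2_pow_inj hHL n₀ n₀ le_rfl hxmem hx
  have hx0' : ∑ i : PIdx Vn e n₀, l (emb i) • primBasis Vn e n₀ i = (0 : ↥(Prim Vn e n₀)) := by
    apply Subtype.ext
    push_cast
    simpa using hx0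
  have hcoef := Fintype.linearIndependent_iff.mp
    (primBasis Vn e n₀).linearIndependent (fun i => l (emb i)) hx0'
  exact hcoef i₀

lemma sl2_li (hdec : DirectSum.IsInternal Vn)
    (he : ∀ n : ℤ, ∀ v ∈ Vn n, e v ∈ Vn (n + 2))
    (hHL : ∀ n : ℕ, Set.BijOn (⇑(e ^ n)) ((Vn (-(n : ℤ))) : Set V) (Vn (n : ℤ))) :
    LinearIndependent ℂ (sfam Vn e) := by
  rw [linearIndependent_iff]
  intro l hl
  suffices key : ∀ T : ℕ, ∀ l : SIdx Vn e →₀ ℂ, (∀ j ∈ l.support, j.1 ≤ T) →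
      Finsupp.linearCombination ℂ (sfam Vn e) l = 0 → l = 0 by
    exact key (l.support.sup fun j => j.1) l (fun j hj => Finset.le_sup (f := fun j => j.1) hj) hl
  intro T
  induction T with
  | zero =>
    intro l hb hl0
    ext j
    by_cases hj : j.1 = 0
    · exact sl2_kill hdec he hHL 0 l hb hl0 j hj
    · by_contra hne
      exact hj (Nat.le_zero.mp (hb j (Finsupp.mem_support_iff.mpr hne)))
  | succ T ih =>
    intro l hb hl0
    have htop : ∀ j : SIdx Vn e, j.1 = T + 1 → l j = 0 :=
      fun j hj => sl2_kill hdec he hHL (T + 1) l hb hl0 j hj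
    refine ih l (fun j hj => ?_) hl0
    have := hb j hj
    rcases Nat.lt_or_ge j.1 (T + 1) with h1 | h1
    · omega
    · exact absurd (htop j (by omega)) (Finsupp.mem_support_iff.mp hj)

end SL2e

section SL2f
set_option linter.unusedSectionVars false

variable {V : Type} [AddCommGroup V] [Module ℂ V] [FiniteDimensional ℂ V]
variable {Vn : ℤ → Submodule ℂ V} {e h : Module.End ℂ V}

variable (hdec : DirectSum.IsInternal Vn)
variable (he : ∀ n : ℤ, ∀ v ∈ Vn n, e v ∈ Vn (n + 2))
variable (hHL : ∀ n : ℕ, Set.BijOn (⇑(e ^ n)) ((Vn (-(n : ℤ))) : Set V) (Vn (n : ℤ)))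

noncomputable def sbasis : Module.Basis (SIdx Vn e) ℂ V :=
  Module.Basis.mk (sl2_li hdec he hHL) (by rw [sl2_span_top hdec he hHL])

lemma sbasis_apply (j : SIdx Vn e) : sbasis hdec he hHL j = sfam Vn e j := Module.Basis.mk_apply _ _ _

/-- The candidate coefficient `k (n - k + 1)`. -/
noncomputable def sC (n k : ℕ) : ℂ := (k : ℂ) * ((n : ℂ) - (k : ℂ) + 1)

noncomputable def fop : Module.End ℂ V :=
  (sbasis hdec he hHL).constr ℂ fun j =>
    sC j.1 (j.2.1 : ℕ) • (e ^ ((j.2.1 : ℕ) - 1)) ↑(primBasis Vn e j.1 j.2.2)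

lemma fop_apply (j : SIdx Vn e) :
    fop hdec he hHL (sfam Vn e j) =
      sC j.1 (j.2.1 : ℕ) • (e ^ ((j.2.1 : ℕ) - 1)) ↑(primBasis Vn e j.1 j.2.2) := by
  rw [← sbasis_apply hdec he hHL j]
  exact Module.Basis.constr_basis _ ℂ _ j

end SL2f

section SL2g
set_option linter.unusedSectionVars false

variable {V : Type} [AddCommGroup V] [Module ℂ V] [FiniteDimensional ℂ V]
variable {Vn : ℤ → Submodule ℂ V} {e h : Module.End ℂ V}

lemma sfam_weight (he : ∀ n : ℤ, ∀ v ∈ Vn n, e v ∈ Vn (n + 2))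
    (hh : ∀ n : ℤ, ∀ v ∈ Vn n, h v = (n : ℂ) • v) (j : SIdx Vn e) :
    h (sfam Vn e j) = ((-(j.1 : ℤ) + 2 * ((j.2.1 : ℕ) : ℤ) : ℤ) : ℂ) • sfam Vn e j :=
  hh _ _ (by exact_mod_cast sfam_mem he j)

lemma pow_pred_succ {k : ℕ} (hk : 1 ≤ k) (x : V) :
    e ((e ^ (k - 1)) x) = (e ^ k) x := by
  rw [← Module.End.mul_apply, ← pow_succ']
  congr 2
  omega

lemma smul_pow_pred_succ (n k : ℕ) (x : V) :
    sC n k • e ((e ^ (k - 1)) x) = sC n k • (e ^ k) x := by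
  by_cases hk : 1 ≤ k
  · rw [pow_pred_succ hk]
  · have : k = 0 := by omega
    subst this
    simp [sC]

lemma sl2_rel1 (hdec : DirectSum.IsInternal Vn)
    (he : ∀ n : ℤ, ∀ v ∈ Vn n, e v ∈ Vn (n + 2))
    (hh : ∀ n : ℤ, ∀ v ∈ Vn n, h v = (n : ℂ) • v)
    (hHL : ∀ n : ℕ, Set.BijOn (⇑(e ^ n)) ((Vn (-(n : ℤ))) : Set V) (Vn (n : ℤ))) :
    h * e - e * h = (2 : ℂ) • e := by
  refine Module.Basis.ext (sbasis hdec he hHL) fun j => ?_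
  obtain ⟨n, k, i⟩ := j
  rw [sbasis_apply]
  simp only [LinearMap.sub_apply, Module.End.mul_apply, LinearMap.smul_apply]
  by_cases hk : (k : ℕ) < n
  · rw [sfam_e_lt hk, sfam_weight he hh, sfam_weight he hh, map_smul, sfam_e_lt hk,
      ← sub_smul]
    congr 1
    push_cast
    ring
  · rw [sfam_e_top (by omega), sfam_weight he hh, map_smul, sfam_e_top (by omega)]
    simp

lemma sl2_rel3 (hdec : DirectSum.IsInternal Vn)
    (he : ∀ n : ℤ, ∀ v ∈ Vn n, e v ∈ Vn (n + 2))
    (hh : ∀ n : ℤ, ∀ v ∈ Vn n, h v = (n : ℂ) • v)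
    (hHL : ∀ n : ℕ, Set.BijOn (⇑(e ^ n)) ((Vn (-(n : ℤ))) : Set V) (Vn (n : ℤ))) :
    e * fop hdec he hHL - fop hdec he hHL * e = h := by
  refine Module.Basis.ext (sbasis hdec he hHL) fun j => ?_
  obtain ⟨n, k, i⟩ := j
  rw [sbasis_apply]
  simp only [LinearMap.sub_apply, Module.End.mul_apply]
  rw [fop_apply, sfam_weight he hh, map_smul]
  have hstepA : sC n (k : ℕ) • e ((e ^ ((k : ℕ) - 1)) ↑(primBasis Vn e n i)) =
      sC n (k : ℕ) • (e ^ (k : ℕ)) ↑(primBasis Vn e n i) := smul_pow_pred_succ n _ _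
  have hstepB : fop hdec he hHL (e (sfam Vn e ⟨n, k, i⟩)) =
      sC n ((k : ℕ) + 1) • (e ^ (k : ℕ)) ↑(primBasis Vn e n i) := by
    by_cases hk : (k : ℕ) < n
    · rw [sfam_e_lt hk, fop_apply]
      norm_num
    · rw [sfam_e_top (by omega), map_zero]
      have hkn : (k : ℕ) = n := by omega
      have : sC n ((k : ℕ) + 1) = 0 := by
        rw [hkn]; simp only [sC]; push_cast; ring
      rw [this, zero_smul]
  rw [hstepA, hstepB]
  show _ = _ • sfam Vn e (⟨n, k, i⟩ : SIdx Vn e)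
  show _ = _ • (e ^ (k : ℕ)) (↑(primBasis Vn e n i))
  rw [← sub_smul]
  congr 1
  simp only [sC]
  push_cast
  ring

lemma sl2_rel2 (hdec : DirectSum.IsInternal Vn)
    (he : ∀ n : ℤ, ∀ v ∈ Vn n, e v ∈ Vn (n + 2))
    (hh : ∀ n : ℤ, ∀ v ∈ Vn n, h v = (n : ℂ) • v)
    (hHL : ∀ n : ℕ, Set.BijOn (⇑(e ^ n)) ((Vn (-(n : ℤ))) : Set V) (Vn (n : ℤ))) :
    h * fop hdec he hHL - fop hdec he hHL * h = (-2 : ℂ) • fop hdec he hHL := by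
  refine Module.Basis.ext (sbasis hdec he hHL) fun j => ?_
  obtain ⟨n, k, i⟩ := j
  rw [sbasis_apply]
  simp only [LinearMap.sub_apply, Module.End.mul_apply, LinearMap.smul_apply]
  rw [fop_apply, sfam_weight he hh, map_smul, map_smul, fop_apply]
  have hstep : sC n (k : ℕ) • h ((e ^ ((k : ℕ) - 1)) ↑(primBasis Vn e n i)) =
      sC n (k : ℕ) • ((-(n : ℤ) + 2 * ((k : ℕ) : ℤ) - 2 : ℤ) : ℂ) •
        (e ^ ((k : ℕ) - 1)) ↑(primBasis Vn e n i) := by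
    by_cases hk : 1 ≤ (k : ℕ)
    · have hmem := sl2_pow_mem he ((k : ℕ) - 1) _ _ (Prim_mem_Vn (primBasis Vn e n i).2)
      have harith : -(n : ℤ) + 2 * (((k : ℕ) - 1 : ℕ) : ℤ) = -(n : ℤ) + 2 * ((k : ℕ) : ℤ) - 2 := by
        omega
      rw [hh _ _ (by rwa [harith] at hmem)]
    · have : (k : ℕ) = 0 := by omega
      rw [this]
      simp [sC]
  rw [hstep, ← smul_comm (((-(n : ℤ) + 2 * ((k : ℕ) : ℤ) - 2 : ℤ) : ℂ))]
  rw [← sub_smul, ← smul_assoc, ← smul_assoc]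
  congr 1
  simp only [smul_eq_mul]
  push_cast
  ring

end SL2g

section SL2h
set_option linter.unusedSectionVars false

variable {V : Type} [AddCommGroup V] [Module ℂ V] [FiniteDimensional ℂ V]
variable {Vn : ℤ → Submodule ℂ V} {e h : Module.End ℂ V}

lemma fop_sfam_mem (hdec : DirectSum.IsInternal Vn)
    (he : ∀ n : ℤ, ∀ v ∈ Vn n, e v ∈ Vn (n + 2))
    (hHL : ∀ n : ℕ, Set.BijOn (⇑(e ^ n)) ((Vn (-(n : ℤ))) : Set V) (Vn (n : ℤ)))
    (j : SIdx Vn e) :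
    fop hdec he hHL (sfam Vn e j) ∈ Vn (-(j.1 : ℤ) + 2 * ((j.2.1 : ℕ) : ℤ) - 2) := by
  obtain ⟨n, k, i⟩ := j
  rw [fop_apply]
  by_cases hk : 1 ≤ (k : ℕ)
  · refine Submodule.smul_mem _ _ ?_
    have hmem := sl2_pow_mem he ((k : ℕ) - 1) _ _ (Prim_mem_Vn (primBasis Vn e n i).2)
    have harith : -(n : ℤ) + 2 * (((k : ℕ) - 1 : ℕ) : ℤ) =
        -(n : ℤ) + 2 * ((k : ℕ) : ℤ) - 2 := by omega
    rwa [harith] at hmem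
  · have : (k : ℕ) = 0 := by omega
    rw [this]
    simp only [sC]
    push_cast
    rw [zero_mul, zero_smul]
    exact Submodule.zero_mem _

lemma fop_graded (hdec : DirectSum.IsInternal Vn)
    (he : ∀ n : ℤ, ∀ v ∈ Vn n, e v ∈ Vn (n + 2))
    (hHL : ∀ n : ℕ, Set.BijOn (⇑(e ^ n)) ((Vn (-(n : ℤ))) : Set V) (Vn (n : ℤ))) :
    ∀ m : ℤ, ∀ v ∈ Vn m, fop hdec he hHL v ∈ Vn (m - 2) := by
  intro m v hv
  have hvtop : v ∈ Submodule.span ℂ (Set.range (sfam Vn e)) := by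
    rw [sl2_span_top hdec he hHL]; exact Submodule.mem_top
  obtain ⟨l, hl⟩ := (Finsupp.mem_span_range_iff_exists_finsupp).mp hvtop
  have hv2 : sl2proj hdec m v = v := sl2proj_of_mem_same hdec hv
  have hexp : v = l.sum fun j c => c • sl2proj hdec m (sfam Vn e j) := by
    conv_lhs => rw [← hv2, ← hl]
    rw [map_finsuppSum]
    simp only [map_smul]
  rw [hexp, map_finsuppSum]
  simp only [map_smul]
  refine Submodule.sum_mem _ fun j _ => Submodule.smul_mem _ _ ?_
  by_cases hw : -(j.1 : ℤ) + 2 * ((j.2.1 : ℕ) : ℤ) = m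
  · rw [sl2proj_of_mem_same hdec (by rw [← hw] at hv ⊢; exact sfam_mem he j)]
    have := fop_sfam_mem hdec he hHL j
    rwa [hw] at this
  · rw [sl2proj_of_mem_ne hdec (by exact_mod_cast hw) (sfam_mem he j), map_zero]
    exact Submodule.zero_mem _

end SL2h

section SL2i
set_option linter.unusedSectionVars false

variable {V : Type} [AddCommGroup V] [Module ℂ V] [FiniteDimensional ℂ V]
variable {Vn : ℤ → Submodule ℂ V} {e h f' : Module.End ℂ V}

lemma sl2_uniq_comm (he : ∀ n : ℤ, ∀ v ∈ Vn n, e v ∈ Vn (n + 2))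
    (hh : ∀ n : ℤ, ∀ v ∈ Vn n, h v = (n : ℂ) • v)
    (hf4 : e * f' - f' * e = h) :
    ∀ (t : ℕ) (m : ℤ), ∀ v ∈ Vn m, (e ^ t) (f' v) =
      f' ((e ^ t) v) + (((t : ℤ) * m + t * ((t : ℤ) - 1) : ℤ) : ℂ) • (e ^ (t - 1)) v := by
  have hstep : ∀ (m' : ℤ), ∀ y ∈ Vn m', e (f' y) = f' (e y) + ((m' : ℤ) : ℂ) • y := by
    intro m' y hy
    have h1 := LinearMap.ext_iff.mp hf4 y
    simp only [LinearMap.sub_apply, Module.End.mul_apply] at h1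
    rw [hh _ _ hy] at h1
    linear_combination (norm := module) h1
  intro t
  induction t with
  | zero =>
    intro m v hv
    norm_num
  | succ t ih =>
    intro m v hv
    have h1 : (e ^ (t + 1)) (f' v) = e ((e ^ t) (f' v)) := by
      rw [pow_succ', Module.End.mul_apply]
    have h2 : e ((e ^ t) v) = (e ^ (t + 1)) v := by
      rw [pow_succ', Module.End.mul_apply]
    rw [h1, ih m v hv, map_add, map_smul, hstep (m + 2 * t) _ (sl2_pow_mem he t m v hv), h2]
    by_cases ht : 1 ≤ t
    · rw [pow_pred_succ ht]
      have hidx : t + 1 - 1 = t := by omega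
      rw [hidx, add_assoc, ← add_smul]
      congr 2
      push_cast
      ring
    · have : t = 0 := by omega
      subst this
      norm_num

lemma sl2_uniq_prim
    (hHL : ∀ n : ℕ, Set.BijOn (⇑(e ^ n)) ((Vn (-(n : ℤ))) : Set V) (Vn (n : ℤ)))
    (he : ∀ n : ℤ, ∀ v ∈ Vn n, e v ∈ Vn (n + 2))
    (hh : ∀ n : ℤ, ∀ v ∈ Vn n, h v = (n : ℂ) • v)
    (hf1 : ∀ n : ℤ, ∀ v ∈ Vn n, f' v ∈ Vn (n - 2))
    (hf4 : e * f' - f' * e = h)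
    {n : ℕ} {b : V} (hb : b ∈ Prim Vn e n) : f' b = 0 := by
  have h1 := sl2_uniq_comm he hh hf4 (n + 1) (-(n : ℤ)) b (Prim_mem_Vn hb)
  rw [Prim_pow_succ hb, map_zero, zero_add] at h1
  have hc : ((((n + 1 : ℕ) : ℤ) * (-(n : ℤ)) + ((n + 1 : ℕ) : ℤ) * (((n + 1 : ℕ) : ℤ) - 1) : ℤ) : ℂ)
      = 0 := by push_cast; ring
  rw [hc, zero_smul] at h1
  have hmem : f' b ∈ Vn (-((n + 2 : ℕ) : ℤ)) := by
    have := hf1 (-(n : ℤ)) b (Prim_mem_Vn hb)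
    have harith : -(n : ℤ) - 2 = -((n + 2 : ℕ) : ℤ) := by push_cast; ring
    rwa [harith] at this
  exact sl2_pow_inj hHL (n + 2) (n + 1) (by omega) hmem h1

lemma sl2_uniq_string
    (hHL : ∀ n : ℕ, Set.BijOn (⇑(e ^ n)) ((Vn (-(n : ℤ))) : Set V) (Vn (n : ℤ)))
    (he : ∀ n : ℤ, ∀ v ∈ Vn n, e v ∈ Vn (n + 2))
    (hh : ∀ n : ℤ, ∀ v ∈ Vn n, h v = (n : ℂ) • v)
    (hf1 : ∀ n : ℤ, ∀ v ∈ Vn n, f' v ∈ Vn (n - 2))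
    (hf4 : e * f' - f' * e = h)
    {n : ℕ} {b : V} (hb : b ∈ Prim Vn e n) :
    ∀ k : ℕ, k ≤ n → f' ((e ^ k) b) = sC n k • (e ^ (k - 1)) b := by
  intro k
  induction k with
  | zero =>
    intro _
    have : sC n 0 = 0 := by simp [sC]
    rw [this, zero_smul, pow_zero, Module.End.one_apply]
    exact sl2_uniq_prim hHL he hh hf1 hf4 hb
  | succ k ih =>
    intro hk
    have hx : (e ^ k) b ∈ Vn (-(n : ℤ) + 2 * k) := sl2_pow_mem he k _ _ (Prim_mem_Vn hb)
    have h1 := LinearMap.ext_iff.mp hf4 ((e ^ k) b)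
    simp only [LinearMap.sub_apply, Module.End.mul_apply] at h1
    rw [hh _ _ hx] at h1
    have h2 : (e ^ (k + 1)) b = e ((e ^ k) b) := by
      rw [pow_succ', Module.End.mul_apply]
    have h3 : f' ((e ^ (k + 1)) b) = e (f' ((e ^ k) b)) - ((-(n : ℤ) + 2 * k : ℤ) : ℂ) • (e ^ k) b := by
      rw [h2]
      linear_combination (norm := module) -h1
    rw [h3, ih (by omega), map_smul, smul_pow_pred_succ n k b]
    have hidx : k + 1 - 1 = k := by omega
    rw [hidx, ← sub_smul]
    congr 1
    simp only [sC]
    push_cast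
    ring

end SL2i

/-- Let `V = ⨁ₙ Vₙ` be a finite dimensional graded vector space, `e` an
operator mapping `Vₙ` to `Vₙ₊₂`, `h` the operator acting on `Vₙ` by the scalar
`n`, and suppose the hard Lefschetz property holds: `eⁿ : V₋ₙ → Vₙ` is an
isomorphism for all `n ≥ 0`.  Then there is a unique linear operator `f`
mapping `Vₙ` to `Vₙ₋₂` such that `(e, h, f)` is an `sl₂`-triple, i.e.
`[h, e] = 2e`, `[h, f] = -2f`, `[e, f] = h`. -/
theorem stmt7 (V : Type) [AddCommGroup V] [Module ℂ V] [FiniteDimensional ℂ V]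
    (Vn : ℤ → Submodule ℂ V) (hdec : DirectSum.IsInternal Vn)
    (e h : Module.End ℂ V)
    (he : ∀ n : ℤ, ∀ v ∈ Vn n, e v ∈ Vn (n + 2))
    (hh : ∀ n : ℤ, ∀ v ∈ Vn n, h v = (n : ℂ) • v)
    (hHL : ∀ n : ℕ, Set.BijOn (⇑(e ^ n)) (Vn (-(n : ℤ)) : Set V) (Vn (n : ℤ))) :
    ∃! f : Module.End ℂ V,
      (∀ n : ℤ, ∀ v ∈ Vn n, f v ∈ Vn (n - 2)) ∧
      h * e - e * h = (2 : ℂ) • e ∧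
      h * f - f * h = (-2 : ℂ) • f ∧
      e * f - f * e = h := by
  refine ⟨fop hdec he hHL,
    ⟨fop_graded hdec he hHL, sl2_rel1 hdec he hh hHL, sl2_rel2 hdec he hh hHL,
      sl2_rel3 hdec he hh hHL⟩, ?_⟩
  rintro f' ⟨hf1, _hf2, _hf3, hf4⟩
  refine Module.Basis.ext (sbasis hdec he hHL) fun j => ?_
  obtain ⟨n, k, i⟩ := j
  rw [sbasis_apply, fop_apply]
  have hb : (↑(primBasis Vn e n i) : V) ∈ Prim Vn e n := (primBasis Vn e n i).2
  have hstr := sl2_uniq_string hHL he hh hf1 hf4 hb (k : ℕ) (by omega)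
  exact hstr
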